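/- The number of conjugacy classes of G = Z/2 * Z/3 of length 2t equals (1/t) * sum over j from 1 to t of 2^(gcd(j,t)). -/

import Mathlib

noncomputable section

/-- The free product `G = ℤ/2 * ℤ/3`. -/
abbrev G : Type := Monoid.Coprod (Multiplicative (ZMod 2)) (Multiplicative (ZMod 3))

/-- The generator of the `ℤ/2` factor. -/
def a : G := Monoid.Coprod.inl (Multiplicative.ofAdd (1 : ZMod 2))

/-- The generator of the `ℤ/3` factor. -/
def b : G := Monoid.Coprod.inr (Multiplicative.ofAdd (1 : ZMod 3))

/-- Word length of `g ∈ G` with respect to the generating set `{a, b, b⁻¹}`. -/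
def wordLength (g : G) : ℕ :=
  sInf {n | ∃ l : List G, l.length = n ∧ (∀ x ∈ l, x = a ∨ x = b ∨ x = b⁻¹) ∧ l.prod = g}

/-- `g` is an `(ab)`-word: `g = a b^{ε_1} a b^{ε_2} ⋯ a b^{ε_t}` with each `ε_i = ±1`. -/
def IsAbWord (g : G) : Prop :=
  ∃ t : ℕ, 0 < t ∧ ∃ ε : Fin t → ℤ, (∀ i, ε i = 1 ∨ ε i = -1) ∧
    g = (List.ofFn fun i : Fin t => a * b ^ ε i).prod

/-- Minimal word length in the conjugacy class of `g`. -/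
def classLength (g : G) : ℕ := sInf {n | ∃ h : G, IsConj g h ∧ wordLength h = n}

/-- Minimal word length over representatives of a conjugacy class. -/
def conjClassLength (c : ConjClasses G) : ℕ :=
  sInf {n | ∃ g : G, ConjClasses.mk g = c ∧ wordLength g = n}

namespace P11

abbrev Bv : Type := {x : ZMod 3 // x ≠ 0}

instance : DecidableEq Bv := by infer_instance

/-- normal forms -/
abbrev NF : Type := ZMod 3 × List Bv × Bool

/-- `b^x` -/
def Bp (x : ZMod 3) : G := Monoid.Coprod.inr (Multiplicative.ofAdd x)

def Aq (q : Bool) : G := if q then a else 1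

/-- evaluation of a normal form -/
def e (n : NF) : G := Bp n.1 * (n.2.1.map (fun c => a * Bp c.1)).prod * Aq n.2.2

lemma Bp_zero : Bp 0 = 1 := by
  simp [Bp]

lemma Bp_add (x y : ZMod 3) : Bp (x + y) = Bp x * Bp y := by
  simp [Bp, ← map_mul]

lemma a_mul_a : a * a = 1 := by
  rw [a, ← map_mul, ← ofAdd_add, show ((1:ZMod 2) + 1) = 0 by decide, ofAdd_zero, map_one]

lemma a_inv : a⁻¹ = a := by
  rw [inv_eq_iff_mul_eq_one, a_mul_a]

lemma b_eq : b = Bp 1 := rfl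

lemma b_inv : b⁻¹ = Bp 2 := by
  rw [inv_eq_iff_mul_eq_one, b_eq, ← Bp_add]
  rw [show ((1:ZMod 3) + 2) = 0 by decide, Bp_zero]

/-- left multiplication by `a` on normal forms -/
def La : NF → NF
  | (p, l, q) =>
    if h : p = 0 then
      match l with
      | [] => (0, [], !q)
      | c :: l' => (c.1, l', q)
    else (0, ⟨p, h⟩ :: l, q)

def Lb (x : ZMod 3) : NF → NF
  | (p, l, q) => (x + p, l, q)

lemma La_La (n : NF) : La (La n) = n := by
  obtain ⟨p, l, q⟩ := n
  by_cases h : p = 0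
  · subst h
    match l with
    | [] => simp [La]
    | c :: l' => simp [La, c.2]
  · simp [La, h]

def homA : Multiplicative (ZMod 2) →* Function.End NF where
  toFun x := if x.toAdd = 0 then id else La
  map_one' := by simp; rfl
  map_mul' x y := by
    funext n
    show (if (x*y).toAdd = 0 then id else La) n
        = (if x.toAdd = 0 then id else La) ((if y.toAdd = 0 then id else La) n)
    rcases (by decide : ∀ z : ZMod 2, z = 0 ∨ z = 1) x.toAdd with hx | hx <;>
      rcases (by decide : ∀ z : ZMod 2, z = 0 ∨ z = 1) y.toAdd with hy | hy <;>
      rw [toAdd_mul, hx, hy] <;>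
      simp [show ((0:ZMod 2) + 0) = 0 by decide, show ((0:ZMod 2) + 1) = 1 by decide,
        show ((1:ZMod 2) + 0) = 1 by decide, show ((1:ZMod 2) + 1) = 0 by decide,
        show (1:ZMod 2) ≠ 0 by decide, La_La]

def homB : Multiplicative (ZMod 3) →* Function.End NF where
  toFun x := Lb x.toAdd
  map_one' := by funext n; obtain ⟨p, l, q⟩ := n; simp [Lb]; rfl
  map_mul' x y := by
    funext n; obtain ⟨p, l, q⟩ := n
    show Lb (x*y).toAdd (p,l,q) = Lb x.toAdd (Lb y.toAdd (p,l,q))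
    simp [Lb, toAdd_mul, add_assoc]

def Phi : G →* Function.End NF := Monoid.Coprod.lift homA homB

def psi (g : G) : NF := Phi g (0, [], false)

lemma Phi_a : Phi a = La := by
  have h : Phi a = homA (Multiplicative.ofAdd (1:ZMod 2)) :=
    Monoid.Coprod.lift_apply_inl homA homB _
  rw [h]
  show (if (Multiplicative.toAdd (Multiplicative.ofAdd (1:ZMod 2))) = 0 then id else La) = La
  simp [show (1:ZMod 2) ≠ 0 by decide]

lemma Phi_Bp (x : ZMod 3) : Phi (Bp x) = Lb x := by
  have h : Phi (Bp x) = homB (Multiplicative.ofAdd x) :=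
    Monoid.Coprod.lift_apply_inr homA homB _
  rw [h]; rfl

lemma e_La (n : NF) : e (La n) = a * e n := by
  obtain ⟨p, l, q⟩ := n
  by_cases h : p = 0
  · subst h
    match l with
    | [] =>
      cases q <;> simp [La, e, Bp_zero, Aq, a_mul_a, mul_assoc]
    | c :: l' =>
      simp [La, e, Bp_zero, mul_assoc, a_mul_a]
      rw [← mul_assoc a a, a_mul_a, one_mul]
  · simp [La, e, h, Bp_zero, mul_assoc]

lemma e_Lb (x : ZMod 3) (n : NF) : e (Lb x n) = Bp x * e n := by
  obtain ⟨p, l, q⟩ := n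
  simp [Lb, e, Bp_add, mul_assoc]

lemma e_Phi (g : G) (n : NF) : e (Phi g n) = g * e n := by
  induction g using Monoid.Coprod.induction_on generalizing n with
  | inl m =>
    have h1 : Phi (Monoid.Coprod.inl m) = if m.toAdd = 0 then id else La :=
      Monoid.Coprod.lift_apply_inl homA homB m
    rcases (by decide : ∀ z : ZMod 2, z = 0 ∨ z = 1) m.toAdd with hm | hm
    · have hm1 : m = 1 := by
        have : Multiplicative.ofAdd m.toAdd = Multiplicative.ofAdd 0 := by rw [hm]
        simpa using this
      rw [h1, hm, if_pos rfl, hm1, map_one, one_mul]; rfl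
    · have hma : Monoid.Coprod.inl m = a := by
        have : Multiplicative.ofAdd m.toAdd = Multiplicative.ofAdd 1 := by rw [hm]
        simp at this
        rw [a, ← this]
      rw [h1, hm, if_neg (by decide), hma]
      exact e_La n
  | inr m =>
    have h1 : Phi (Monoid.Coprod.inr m) = Lb m.toAdd :=
      Monoid.Coprod.lift_apply_inr homA homB m
    have h2 : Monoid.Coprod.inr m = Bp m.toAdd := rfl
    rw [h1, h2]
    exact e_Lb _ n
  | mul x y hx hy =>
    rw [map_mul]
    show e (Phi x (Phi y n)) = (x * y) * e n
    rw [hx, hy, mul_assoc]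

lemma e_psi (g : G) : e (psi g) = g := by
  have := e_Phi g (0, [], false)
  rw [psi]; convert this using 1; simp [e, Bp_zero, Aq]

lemma psi_e (n : NF) : psi (e n) = n := by
  obtain ⟨p, l, q⟩ := n
  have hq : Phi (Aq q) (0, [], false) = (0, [], q) := by
    cases q
    · simp [Aq]; rfl
    · show Phi a (0, [], false) = (0, [], true)
      rw [Phi_a]; rfl
  have hl : ∀ l : List Bv, Phi ((l.map (fun c => a * Bp c.1)).prod) (0, [], q) = (0, l, q) := by
    intro l
    induction l with
    | nil => simp; rfl
    | cons c l' ih =>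
      simp only [List.map_cons, List.prod_cons, map_mul]
      show Phi (a * Bp c.1) (Phi ((l'.map (fun c => a * Bp c.1)).prod) (0, [], q)) = _
      rw [ih, map_mul]
      show Phi a (Phi (Bp c.1) (0, l', q)) = _
      rw [Phi_Bp, Phi_a]
      show La (c.1 + 0, l', q) = _
      simp [La, c.2]
  have he : e (p, l, q) = Bp p * ((l.map (fun c => a * Bp c.1)).prod * Aq q) := by
    simp [e, mul_assoc]
  rw [psi, he, map_mul, map_mul]
  show Phi (Bp p) (Phi _ (Phi (Aq q) (0, [], false))) = _
  rw [hq, hl, Phi_Bp]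
  show (p + 0, l, q) = _
  simp [Lb]

lemma e_injective : Function.Injective e :=
  Function.LeftInverse.injective psi_e

lemma psi_injective : Function.Injective psi :=
  Function.LeftInverse.injective e_psi

/-- length of a normal form -/
def lam (n : NF) : ℕ :=
  (if n.1 = 0 then 0 else 1) + 2 * n.2.1.length + (if n.2.2 then 1 else 0)

lemma lam_La (n : NF) : lam (La n) ≤ lam n + 1 := by
  obtain ⟨p, l, q⟩ := n
  by_cases h : p = 0
  · subst h
    match l with
    | [] => cases q <;> simp [La, lam]
    | c :: l' => simp [La, lam, c.2]; omega
  · simp [La, lam, h]; omega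

lemma lam_Lb (x : ZMod 3) (n : NF) : lam (Lb x n) ≤ lam n + 1 := by
  obtain ⟨p, l, q⟩ := n
  by_cases h : x + p = 0 <;> cases q <;> simp [Lb, lam, h] <;> omega

lemma lam_psi_one : lam (psi 1) = 0 := by
  have : psi 1 = (0, [], false) := by rw [psi, map_one]; rfl
  rw [this]; rfl

lemma lam_psi_gen_mul (s g : G) (hs : s = a ∨ s = b ∨ s = b⁻¹) :
    lam (psi (s * g)) ≤ lam (psi g) + 1 := by
  have hmul : psi (s * g) = Phi s (psi g) := by rw [psi, map_mul]; rfl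
  rw [hmul]
  rcases hs with h | h | h
  · subst h
    rw [Phi_a]; exact lam_La _
  · subst h
    rw [b_eq, Phi_Bp]; exact lam_Lb _ _
  · subst h
    rw [b_inv, Phi_Bp]; exact lam_Lb _ _

lemma lam_psi_prod_le (l : List G) (hl : ∀ x ∈ l, x = a ∨ x = b ∨ x = b⁻¹) :
    lam (psi l.prod) ≤ l.length := by
  induction l with
  | nil => simp [lam_psi_one]
  | cons s l' ih =>
    simp only [List.prod_cons, List.length_cons]
    calc lam (psi (s * l'.prod)) ≤ lam (psi l'.prod) + 1 :=
          lam_psi_gen_mul s l'.prod (hl s (by simp))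
    _ ≤ l'.length + 1 := by
          have := ih (fun x hx => hl x (by simp [hx]))
          omega

/-- generator list realizing a normal form -/
def genList (n : NF) : List G :=
  (if n.1 = 0 then [] else [Bp n.1]) ++ (n.2.1.flatMap fun c => [a, Bp c.1]) ++
    (if n.2.2 then [a] else [])

lemma Bp_gen (x : ZMod 3) (hx : x ≠ 0) : Bp x = b ∨ Bp x = b⁻¹ := by
  rcases (by decide : ∀ z : ZMod 3, z = 0 ∨ z = 1 ∨ z = 2) x with h | h | h
  · exact absurd h hx
  · left; rw [h]; rfl
  · right; rw [h, b_inv]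

lemma genList_mem (n : NF) : ∀ x ∈ genList n, x = a ∨ x = b ∨ x = b⁻¹ := by
  intro x hx
  obtain ⟨p, l, q⟩ := n
  simp only [genList, List.mem_append, List.mem_flatMap] at hx
  rcases hx with (hx | hx) | hx
  · by_cases hp : p = 0
    · simp [hp] at hx
    · simp [hp] at hx
      rcases Bp_gen p hp with h | h
      · right; left; rw [hx, h]
      · right; right; rw [hx, h]
  · rcases hx with ⟨c, _, hx⟩
    simp at hx
    rcases hx with hx | hx
    · left; exact hx
    · rcases Bp_gen c.1 c.2 with h | h
      · right; left; rw [hx, h]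
      · right; right; rw [hx, h]
  · cases q
    · simp at hx
    · simp at hx; left; exact hx

lemma genList_prod (n : NF) : (genList n).prod = e n := by
  obtain ⟨p, l, q⟩ := n
  simp only [genList, e, List.prod_append]
  congr 1
  · congr 1
    · by_cases h : p = 0 <;> simp [h, Bp_zero]
    · induction l with
      | nil => simp
      | cons c l' ih =>
        simp only [List.flatMap_cons, List.map_cons, List.prod_cons, List.prod_append, ih]
        simp [mul_assoc]
  · cases q <;> simp [Aq]

lemma genList_length (n : NF) : (genList n).length = lam n := by
  obtain ⟨p, l, q⟩ := n
  simp only [genList, lam, List.length_append]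
  have : (l.flatMap fun c => [a, Bp c.1]).length = 2 * l.length := by
    induction l with
    | nil => simp
    | cons c l' ih =>
      simp only [List.flatMap_cons, List.length_append, List.length_cons, List.length_nil, ih]
      omega
  rw [this]
  by_cases h : p = 0 <;> cases q <;> simp [h] <;> omega

lemma wordLength_eq (g : G) : wordLength g = lam (psi g) := by
  apply le_antisymm
  · apply Nat.sInf_le
    exact ⟨genList (psi g), by rw [genList_length], genList_mem _, by rw [genList_prod, e_psi]⟩
  · apply le_csInf
    · exact ⟨lam (psi g), genList (psi g), by rw [genList_length], genList_mem _,
        by rw [genList_prod, e_psi]⟩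
    · rintro m ⟨l, hlen, hmem, hprod⟩
      rw [← hlen, ← hprod]
      exact lam_psi_prod_le l hmem

abbrev Neck := Quotient (List.IsRotated.setoid Bv)

def nu : ZMod 3 → List Bv → Bool → Option Neck
  | p, l, true =>
    if hp : p = 0 then
      match l with
      | [] => none
      | c :: l' => nu c.1 l' false
    else some ⟦l ++ [⟨p, hp⟩]⟧
  | p, l, false =>
    if hp : p = 0 then
      if l = [] then none else some ⟦l⟧
    else
      match h : l.getLast? with
      | none => none
      | some c =>
        if hc : c.1 + p = 0 then nu 0 l.dropLast true
        else some ⟦l.dropLast ++ [⟨c.1 + p, hc⟩]⟧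
termination_by p l q => l.length
decreasing_by
  · simp
  · have hne : l ≠ [] := fun hl => by rw [hl] at h; simp at h
    have h1 : l.dropLast.length = l.length - 1 := List.length_dropLast
    have h2 : 0 < l.length := List.length_pos_iff.2 hne
    omega

lemma nu_true_zero_nil : nu 0 [] true = none := by rw [nu.eq_def]; simp

lemma nu_true_zero_cons (c : Bv) (l : List Bv) : nu 0 (c :: l) true = nu c.1 l false := by
  rw [nu.eq_def]; simp

lemma nu_true_ne (p : ZMod 3) (hp : p ≠ 0) (l : List Bv) :
    nu p l true = some (⟦l ++ [⟨p, hp⟩]⟧ : Neck) := by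
  rw [nu.eq_def]; simp [hp]

lemma nu_false_zero (l : List Bv) :
    nu 0 l false = if l = [] then none else some (⟦l⟧ : Neck) := by
  rw [nu.eq_def]; simp

lemma nu_false_ne_nil (p : ZMod 3) (hp : p ≠ 0) : nu p [] false = none := by
  rw [nu.eq_def]; simp [hp]

lemma nu_false_ne_concat (p : ZMod 3) (hp : p ≠ 0) (l : List Bv) (c : Bv) :
    nu p (l ++ [c]) false =
      if hc : c.1 + p = 0 then nu 0 l true else some (⟦l ++ [⟨c.1 + p, hc⟩]⟧ : Neck) := by
  rw [nu.eq_def]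
  simp only [dif_neg hp]
  split
  · next h => simp at h
  · next c' h =>
    rw [List.getLast?_concat] at h
    obtain rfl : c' = c := by injection h with h'; exact h'.symm
    rw [List.dropLast_concat]

def Ra : NF → NF
  | (p, l, q) => (p, l, !q)

def Rb (x : ZMod 3) : NF → NF
  | (p, l, q) =>
    if hx : x = 0 then (p, l, q)
    else if q then (p, l ++ [⟨x, hx⟩], false)
    else if hl : l = [] then (p + x, [], false)
    else
      if hc : (l.getLast hl).1 + x = 0 then (p, l.dropLast, true)
      else (p, l.dropLast ++ [⟨(l.getLast hl).1 + x, hc⟩], false)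

lemma Ra_eq (p l q) : Ra (p, l, q) = (p, l, !q) := rfl

lemma La_ne (p : ZMod 3) (hp : p ≠ 0) (l q) : La (p, l, q) = (0, ⟨p, hp⟩ :: l, q) := by
  simp [La, hp]

lemma La_zero_nil (q) : La (0, [], q) = (0, [], !q) := by simp [La]

lemma La_zero_cons (c : Bv) (l q) : La (0, c :: l, q) = (c.1, l, q) := by simp [La]

lemma Rb_true (x : ZMod 3) (hx : x ≠ 0) (p l) :
    Rb x (p, l, true) = (p, l ++ [⟨x, hx⟩], false) := by
  simp [Rb, hx]

lemma Rb_false_nil (x : ZMod 3) (hx : x ≠ 0) (p) :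
    Rb x (p, [], false) = (p + x, [], false) := by
  simp [Rb, hx]

lemma Rb_false_concat (x : ZMod 3) (hx : x ≠ 0) (p) (l : List Bv) (c : Bv) :
    Rb x (p, l ++ [c], false) =
      if hc : c.1 + x = 0 then (p, l, true)
      else (p, l ++ [⟨c.1 + x, hc⟩], false) := by
  have h1 : l ++ [c] ≠ [] := by simp
  show (if hx' : x = 0 then _ else _) = _
  rw [dif_neg hx]
  simp only [Bool.false_eq_true, if_false, dif_neg h1, List.getLast_concat,
    List.dropLast_concat]

lemma e_Ra (n : NF) : e (Ra n) = e n * a := by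
  obtain ⟨p, l, q⟩ := n
  cases q
  · simp [Ra, e, Aq]
  · simp [Ra, e, Aq, mul_assoc, a_mul_a]

lemma prod_concat (l : List Bv) (c : Bv) :
    ((l ++ [c]).map (fun c => a * Bp c.1)).prod
      = (l.map (fun c => a * Bp c.1)).prod * (a * Bp c.1) := by
  simp

lemma e_Rb (x : ZMod 3) (n : NF) : e (Rb x n) = e n * Bp x := by
  obtain ⟨p, l, q⟩ := n
  by_cases hx : x = 0
  · simp [Rb, hx, Bp_zero]
  · cases q
    · rcases l.eq_nil_or_concat' with hl | ⟨l', c, rfl⟩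
      · subst hl
        rw [Rb_false_nil x hx]
        simp [e, Aq, Bp_add]
      · rw [Rb_false_concat x hx]
        by_cases hcx : c.1 + x = 0
        · rw [dif_pos hcx, e, e, prod_concat]
          simp [Aq, mul_assoc, ← Bp_add, hcx, Bp_zero]
        · rw [dif_neg hcx, e, e, prod_concat, prod_concat]
          simp [Aq, mul_assoc, ← Bp_add]
    · rw [Rb_true x hx, e, e, prod_concat]
      simp [Aq, mul_assoc]

lemma psi_mul_a (g : G) : psi (g * a) = Ra (psi g) := by
  have h : g * a = e (Ra (psi g)) := by rw [e_Ra, e_psi]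
  rw [h, psi_e]

lemma psi_mul_Bp (x : ZMod 3) (g : G) : psi (g * Bp x) = Rb x (psi g) := by
  have h : g * Bp x = e (Rb x (psi g)) := by rw [e_Rb, e_psi]
  rw [h, psi_e]

lemma psi_a_mul (g : G) : psi (a * g) = La (psi g) := by
  rw [psi, map_mul]
  show Phi a (Phi g _) = _
  rw [Phi_a]; rfl

lemma psi_Bp_mul (x : ZMod 3) (g : G) : psi (Bp x * g) = Lb x (psi g) := by
  rw [psi, map_mul]
  show Phi (Bp x) (Phi g _) = _
  rw [Phi_Bp]; rfl

def nuN : NF → Option Neck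
  | (p, l, q) => nu p l q

lemma nuN_eq (p l q) : nuN (p, l, q) = nu p l q := rfl

lemma Lb_eq (x : ZMod 3) (p l q) : Lb x (p, l, q) = (x + p, l, q) := rfl

lemma nu_conj_a (n : NF) : nuN (La (Ra n)) = nuN n := by
  obtain ⟨p, l, q⟩ := n
  rw [Ra_eq]
  by_cases hp : p = 0
  · subst hp
    match l with
    | [] => rw [La_zero_nil, nuN_eq, nuN_eq, Bool.not_not]
    | c :: l' =>
      rw [La_zero_cons, nuN_eq, nuN_eq]
      cases q
      · simp only [Bool.not_false]
        rw [nu_true_ne c.1 c.2 l', nu_false_zero]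
        simp only [List.cons_ne_nil, if_false]
        congr 1
        apply Quotient.sound
        show (l' ++ [⟨c.1, c.2⟩]) ~r (c :: l')
        exact List.isRotated_concat c l'
      · simp only [Bool.not_true]
        rw [nu_true_zero_cons]
  · rw [La_ne p hp, nuN_eq, nuN_eq]
    cases q
    · simp only [Bool.not_false]
      rw [nu_true_zero_cons]
    · simp only [Bool.not_true]
      rw [nu_false_zero, nu_true_ne p hp l]
      simp only [List.cons_ne_nil, if_false]
      congr 1
      apply Quotient.sound
      show (⟨p, hp⟩ :: l) ~r (l ++ [⟨p, hp⟩])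
      exact (List.isRotated_concat _ _).symm

lemma neg_ne_zero' {d : ZMod 3} (hd : d ≠ 0) : -d ≠ 0 := by
  intro h; apply hd; rw [← neg_neg d, h, neg_zero]

lemma nu_conj_b (d : ZMod 3) (hd : d ≠ 0) (n : NF) :
    nuN (Lb d (Rb (-d) n)) = nuN n := by
  obtain ⟨p, l, q⟩ := n
  have hnd : -d ≠ 0 := neg_ne_zero' hd
  cases q
  · -- q = false
    rcases l.eq_nil_or_concat' with hl | ⟨l', c, rfl⟩
    · subst hl
      rw [Rb_false_nil _ hnd, Lb_eq, nuN_eq, nuN_eq]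
      have h1 : d + (p + -d) = p := by ring
      rw [h1]
    · rw [Rb_false_concat _ hnd]
      by_cases hcd : c.1 + -d = 0
      · have hc1 : c.1 = d := by linear_combination hcd
        rw [dif_pos hcd, Lb_eq, nuN_eq, nuN_eq]
        by_cases hp : p = 0
        · subst hp
          rw [add_zero, nu_true_ne d hd l', nu_false_zero, if_neg (by simp)]
          have h2 : (⟨d, hd⟩ : Bv) = c := Subtype.ext hc1.symm
          rw [h2]
        · by_cases hdp : d + p = 0
          · rw [hdp, nu_false_ne_concat p hp l' c]
            have hcp : c.1 + p = 0 := by rw [hc1]; exact hdp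
            rw [dif_pos hcp]
          · rw [nu_true_ne _ hdp l', nu_false_ne_concat p hp l' c]
            have hcp : c.1 + p ≠ 0 := by rw [hc1]; exact hdp
            rw [dif_neg hcp]
            have h3 : (⟨d + p, hdp⟩ : Bv) = ⟨c.1 + p, hcp⟩ :=
              Subtype.ext (show d + p = c.1 + p by rw [hc1])
            rw [h3]
      · rw [dif_neg hcd, Lb_eq, nuN_eq, nuN_eq]
        by_cases hp : p = 0
        · subst hp
          rw [add_zero, nu_false_ne_concat d hd l' ⟨c.1 + -d, hcd⟩]
          have h2 : (⟨c.1 + -d, hcd⟩ : Bv).1 + d ≠ 0 := by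
            intro h; apply c.2; linear_combination h
          rw [dif_neg h2, nu_false_zero, if_neg (by simp)]
          have h3 : (⟨(⟨c.1 + -d, hcd⟩ : Bv).1 + d, h2⟩ : Bv) = c :=
            Subtype.ext (by show c.1 + -d + d = c.1; ring)
          rw [h3]
        · by_cases hdp : d + p = 0
          · rw [hdp, nu_false_zero, if_neg (by simp), nu_false_ne_concat p hp l' c]
            have hcp : c.1 + p ≠ 0 := by
              intro h; apply hcd; linear_combination h - hdp
            rw [dif_neg hcp]
            have h3 : (⟨c.1 + -d, hcd⟩ : Bv) = ⟨c.1 + p, hcp⟩ :=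
              Subtype.ext (by show c.1 + -d = c.1 + p; linear_combination -hdp)
            rw [h3]
          · rw [nu_false_ne_concat _ hdp l' ⟨c.1 + -d, hcd⟩,
              nu_false_ne_concat p hp l' c]
            have key : (⟨c.1 + -d, hcd⟩ : Bv).1 + (d + p) = c.1 + p := by
              show c.1 + -d + (d + p) = c.1 + p; ring
            by_cases hcp : c.1 + p = 0
            · rw [dif_pos (by rw [key]; exact hcp), dif_pos hcp]
            · rw [dif_neg (by rw [key]; exact hcp), dif_neg hcp]
              have h3 : (⟨(⟨c.1 + -d, hcd⟩ : Bv).1 + (d + p), by rw [key]; exact hcp⟩ : Bv)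
                  = ⟨c.1 + p, hcp⟩ := Subtype.ext key
              rw [h3]
  · -- q = true
    rw [Rb_true _ hnd, Lb_eq, nuN_eq, nuN_eq]
    by_cases hp : p = 0
    · subst hp
      rw [add_zero, nu_false_ne_concat d hd l ⟨-d, hnd⟩]
      have h2 : (⟨-d, hnd⟩ : Bv).1 + d = 0 := by show -d + d = 0; ring
      rw [dif_pos h2]
    · by_cases hdp : d + p = 0
      · rw [hdp, nu_false_zero, if_neg (by simp), nu_true_ne p hp l]
        have h3 : (⟨-d, hnd⟩ : Bv) = ⟨p, hp⟩ :=
          Subtype.ext (by show -d = p; linear_combination -hdp)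
        rw [h3]
      · rw [nu_false_ne_concat _ hdp l ⟨-d, hnd⟩]
        have key : (⟨-d, hnd⟩ : Bv).1 + (d + p) = p := by show -d + (d + p) = p; ring
        rw [dif_neg (by rw [key]; exact hp)]
        rw [nu_true_ne p hp l]
        have h3 : (⟨(⟨-d, hnd⟩ : Bv).1 + (d + p), by rw [key]; exact hp⟩ : Bv) = ⟨p, hp⟩ :=
          Subtype.ext key
        rw [h3]

def nuG (g : G) : Option Neck := nuN (psi g)

lemma Bp_neg_mul (x : ZMod 3) : Bp (-x) * Bp x = 1 := by
  rw [← Bp_add, neg_add_cancel, Bp_zero]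

lemma Bp_inv (x : ZMod 3) : (Bp x)⁻¹ = Bp (-x) := by
  rw [inv_eq_iff_mul_eq_one, ← Bp_add]
  rw [add_neg_cancel, Bp_zero]

lemma nuG_conj_a (g : G) : nuG (a * g * a⁻¹) = nuG g := by
  rw [a_inv]
  have h1 : a * g * a = a * (g * a) := by rw [mul_assoc]
  rw [nuG, h1, psi_a_mul, psi_mul_a]
  exact nu_conj_a (psi g)

lemma nuG_conj_Bp (d : ZMod 3) (hd : d ≠ 0) (g : G) :
    nuG (Bp d * g * (Bp d)⁻¹) = nuG g := by
  rw [Bp_inv]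
  have h1 : Bp d * g * Bp (-d) = Bp d * (g * Bp (-d)) := by rw [mul_assoc]
  rw [nuG, h1, psi_Bp_mul, psi_mul_Bp]
  exact nu_conj_b d hd (psi g)

lemma nuG_conj (u : G) : ∀ g : G, nuG (u * g * u⁻¹) = nuG g := by
  induction u using Monoid.Coprod.induction_on with
  | inl m =>
    intro g
    rcases (by decide : ∀ z : ZMod 2, z = 0 ∨ z = 1) m.toAdd with hm | hm
    · have hm1 : Monoid.Coprod.inl m = (1 : G) := by
        have : Multiplicative.ofAdd m.toAdd = Multiplicative.ofAdd 0 := by rw [hm]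
        simp at this
        rw [this, map_one]
      rw [hm1]; simp
    · have hma : Monoid.Coprod.inl m = a := by
        have : Multiplicative.ofAdd m.toAdd = Multiplicative.ofAdd 1 := by rw [hm]
        simp at this
        rw [a, ← this]
      rw [hma]; exact nuG_conj_a g
  | inr m =>
    intro g
    have hmb : Monoid.Coprod.inr m = Bp m.toAdd := rfl
    by_cases hm : m.toAdd = 0
    · rw [hmb, hm, Bp_zero]; simp
    · rw [hmb]; exact nuG_conj_Bp m.toAdd hm g
  | mul x y hx hy =>
    intro g
    have h1 : x * y * g * (x * y)⁻¹ = x * (y * g * y⁻¹) * x⁻¹ := by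
      rw [mul_inv_rev]; group
    rw [h1, hx, hy]

lemma nuG_isConj {g h : G} (hc : IsConj g h) : nuG g = nuG h := by
  obtain ⟨u, hu⟩ := isConj_iff.1 hc
  rw [← hu, nuG_conj]

lemma nuG_e (n : NF) : nuG (e n) = nuN n := by rw [nuG, psi_e]

/-- single-rotation conjugation -/
lemma isConj_rot_one (l : List Bv) :
    IsConj (e (0, l, false)) (e (0, l.rotate 1, false)) := by
  match l with
  | [] =>
    have h0 : ([] : List Bv).rotate 1 = [] := rfl
    rw [h0]
  | c :: l' =>
    have hrot : (c :: l').rotate 1 = l' ++ [c] := by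
      rw [List.rotate_cons_succ, List.rotate_zero]
    rw [hrot]
    rw [isConj_comm, isConj_iff]
    refine ⟨a * Bp c.1, ?_⟩
    have h1 : e (0, c :: l', false) = (a * Bp c.1) * e (0, l', false) := by
      simp [e, Aq, Bp_zero, mul_assoc]
    have h2 : e (0, l' ++ [c], false) = e (0, l', false) * (a * Bp c.1) := by
      simp [e, Aq, Bp_zero, prod_concat, mul_assoc]
    rw [h2, h1]
    group

lemma isConj_rotate (l : List Bv) (k : ℕ) :
    IsConj (e (0, l, false)) (e (0, l.rotate k, false)) := by
  induction k with
  | zero => rw [List.rotate_zero]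
  | succ k ih =>
    have : l.rotate (k + 1) = (l.rotate k).rotate 1 := by
      rw [List.rotate_rotate]
    rw [this]
    exact ih.trans (isConj_rot_one _)

lemma isConj_isRotated {l l' : List Bv} (h : l ~r l') :
    IsConj (e (0, l, false)) (e (0, l', false)) := by
  obtain ⟨k, hk⟩ := h
  rw [← hk]
  exact isConj_rotate l k

/-- conjugation steps used in `nu` -/
lemma conj_step1 (c : Bv) (l : List Bv) :
    IsConj (e (0, c :: l, true)) (e (c.1, l, false)) := by
  rw [isConj_comm, isConj_iff]
  refine ⟨a, ?_⟩
  have h1 : e (0, c :: l, true) = a * e (c.1, l, false) * a := by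
    simp [e, Aq, Bp_zero, mul_assoc]
  rw [a_inv, h1]

lemma conj_step2 (p : ZMod 3) (hp : p ≠ 0) (l : List Bv) :
    IsConj (e (p, l, true)) (e (0, l ++ [⟨p, hp⟩], false)) := by
  rw [isConj_iff]
  refine ⟨Bp (-p), ?_⟩
  rw [Bp_inv, neg_neg]
  have h1 : e (p, l, true) = Bp p * (e (0, l, false) * a) := by
    simp [e, Aq, Bp_zero, mul_assoc]
  have h2 : e (0, l ++ [⟨p, hp⟩], false) = e (0, l, false) * a * Bp p := by
    simp [e, Aq, Bp_zero, prod_concat, mul_assoc]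
  rw [h1, h2, ← mul_assoc, ← mul_assoc, Bp_neg_mul, one_mul, mul_assoc]

lemma conj_step3 (p : ZMod 3) (l : List Bv) (c : Bv) (hc : c.1 + p ≠ 0) :
    IsConj (e (p, l ++ [c], false)) (e (0, l ++ [⟨c.1 + p, hc⟩], false)) := by
  rw [isConj_iff]
  refine ⟨Bp (-p), ?_⟩
  rw [Bp_inv, neg_neg]
  have h1 : e (p, l ++ [c], false) = Bp p * (e (0, l, false) * (a * Bp c.1)) := by
    simp [e, Aq, Bp_zero, prod_concat, mul_assoc]
  have h2 : e (0, l ++ [⟨c.1 + p, hc⟩], false)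
      = e (0, l, false) * (a * (Bp c.1 * Bp p)) := by
    simp [e, Aq, Bp_zero, prod_concat, mul_assoc, ← Bp_add]
  rw [h1, h2, ← mul_assoc, ← mul_assoc, Bp_neg_mul, one_mul]
  simp [mul_assoc]

lemma conj_step4 (p : ZMod 3) (l : List Bv) (c : Bv) (hc : c.1 + p = 0) :
    IsConj (e (p, l ++ [c], false)) (e (0, l, true)) := by
  rw [isConj_iff]
  refine ⟨Bp (-p), ?_⟩
  rw [Bp_inv, neg_neg]
  have h1 : e (p, l ++ [c], false) = Bp p * (e (0, l, false) * (a * Bp c.1)) := by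
    simp [e, Aq, Bp_zero, prod_concat, mul_assoc]
  have h2 : e (0, l, true) = e (0, l, false) * a := by
    simp [e, Aq, Bp_zero, mul_assoc]
  rw [h1, h2, ← mul_assoc, ← mul_assoc, Bp_neg_mul, one_mul]
  rw [mul_assoc, mul_assoc, ← Bp_add, hc, Bp_zero, mul_one]

set_option maxHeartbeats 1000000 in
lemma nu_spec : ∀ (L : ℕ) (p : ZMod 3) (l : List Bv) (q : Bool), l.length < L →
    (∀ c : Neck, nu p l q = some c → ∃ l' : List Bv, l' ≠ [] ∧ c = ⟦l'⟧ ∧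
      IsConj (e (p, l, q)) (e (0, l', false)) ∧ 2 * l'.length ≤ lam (p, l, q)) ∧
    (nu p l q = none → ∃ n' : NF, IsConj (e (p, l, q)) (e n') ∧ lam n' ≤ 1) := by
  intro L
  induction L with
  | zero => intro p l q h; omega
  | succ L ih =>
    intro p l q hlen
    cases q
    · -- q = false
      by_cases hp : p = 0
      · subst hp
        rw [nu_false_zero]
        by_cases hl : l = []
        · subst hl
          refine ⟨fun c hc => by simp at hc, fun _ => ⟨(0, [], false), IsConj.refl _, ?_⟩⟩
          simp [lam]
        · rw [if_neg hl]
          refine ⟨fun c hc => ?_, fun hn => by simp at hn⟩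
          refine ⟨l, hl, by injection hc with h; exact h.symm, IsConj.refl _, ?_⟩
          simp [lam]
      · rcases l.eq_nil_or_concat' with hl | ⟨l', c, rfl⟩
        · subst hl
          rw [nu_false_ne_nil p hp]
          refine ⟨fun c hc => by simp at hc, fun _ => ⟨(p, [], false), IsConj.refl _, ?_⟩⟩
          simp [lam, hp]
        · rw [nu_false_ne_concat p hp l' c]
          by_cases hcp : c.1 + p = 0
          · rw [dif_pos hcp]
            have hlen' : l'.length < L := by
              simp only [List.length_append, List.length_cons] at hlen
              omega
            obtain ⟨hsome, hnone⟩ := ih 0 l' true hlen'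
            constructor
            · intro cl hcl
              obtain ⟨l'', h1, h2, h3, h4⟩ := hsome cl hcl
              refine ⟨l'', h1, h2, (conj_step4 p l' c hcp).trans h3, ?_⟩
              have e2 : lam (0, l', true) = 2 * l'.length + 1 := by simp [lam]
              have e1 : lam (p, l' ++ [c], false) = 1 + 2 * (l'.length + 1) := by
                simp [lam, hp]
              rw [e2] at h4
              rw [e1]
              omega
            · intro hcl
              obtain ⟨n', h1, h2⟩ := hnone hcl
              exact ⟨n', (conj_step4 p l' c hcp).trans h1, h2⟩
          · rw [dif_neg hcp]
            refine ⟨fun cl hcl => ?_, fun hn => by simp at hn⟩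
            refine ⟨l' ++ [⟨c.1 + p, hcp⟩], by simp,
              by injection hcl with h; exact h.symm, conj_step3 p l' c hcp, ?_⟩
            have e1 : lam (p, l' ++ [c], false) = 1 + 2 * (l'.length + 1) := by
              simp [lam, hp]
            rw [e1]
            simp only [List.length_append, List.length_cons, List.length_nil]
            omega
    · -- q = true
      by_cases hp : p = 0
      · subst hp
        match l with
        | [] =>
          rw [nu_true_zero_nil]
          refine ⟨fun c hc => by simp at hc, fun _ => ⟨(0, [], true), IsConj.refl _, ?_⟩⟩
          simp [lam]
        | c :: l' =>
          rw [nu_true_zero_cons]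
          have hlen' : l'.length < L := by
            simp only [List.length_cons] at hlen; omega
          obtain ⟨hsome, hnone⟩ := ih c.1 l' false hlen'
          constructor
          · intro cl hcl
            obtain ⟨l'', h1, h2, h3, h4⟩ := hsome cl hcl
            refine ⟨l'', h1, h2, (conj_step1 c l').trans h3, ?_⟩
            have e2 : lam (c.1, l', false) = 1 + 2 * l'.length := by simp [lam, c.2]
            have e1 : lam (0, c :: l', true) = 2 * (l'.length + 1) + 1 := by simp [lam]
            rw [e2] at h4
            rw [e1]
            omega
          · intro hcl
            obtain ⟨n', h1, h2⟩ := hnone hcl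
            exact ⟨n', (conj_step1 c l').trans h1, h2⟩
      · rw [nu_true_ne p hp]
        refine ⟨fun cl hcl => ?_, fun hn => by simp at hn⟩
        refine ⟨l ++ [⟨p, hp⟩], by simp, by injection hcl with h; exact h.symm,
          conj_step2 p hp l, ?_⟩
        have e1 : lam (p, l, true) = 1 + 2 * l.length + 1 := by simp [lam, hp]
        rw [e1]
        simp only [List.length_append, List.length_cons, List.length_nil]
        omega

lemma wordLength_e (n : NF) : wordLength (e n) = lam n := by rw [wordLength_eq, psi_e]

lemma conjLen_w (l : List Bv) (hl : l ≠ []) :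
    conjClassLength (ConjClasses.mk (e (0, l, false))) = 2 * l.length := by
  have hlam : lam (0, l, false) = 2 * l.length := by simp [lam]
  apply le_antisymm
  · exact Nat.sInf_le ⟨e (0, l, false), rfl, by rw [wordLength_e, hlam]⟩
  · have hne0 : {n | ∃ h : G, ConjClasses.mk h = ConjClasses.mk (e (0, l, false)) ∧
        wordLength h = n}.Nonempty :=
      ⟨2 * l.length, e (0, l, false), rfl, by rw [wordLength_e, hlam]⟩
    apply le_csInf hne0
    rintro m ⟨h, hmk, rfl⟩
    have hconj : IsConj h (e (0, l, false)) := ConjClasses.mk_eq_mk_iff_isConj.1 hmk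
    have hnu : nuG h = some (⟦l⟧ : Neck) := by
      rw [nuG_isConj hconj, nuG_e, nuN_eq, nu_false_zero, if_neg hl]
    rcases hps : psi h with ⟨p0, l0, q0⟩
    have hw : wordLength h = lam (p0, l0, q0) := by rw [wordLength_eq, hps]
    have hnu' : nu p0 l0 q0 = some (⟦l⟧ : Neck) := by
      rw [nuG, hps, nuN_eq] at hnu; exact hnu
    obtain ⟨l'', hne, hq, _, hlen⟩ :=
      (nu_spec (l0.length + 1) p0 l0 q0 (by omega)).1 ⟦l⟧ hnu'
    have hll : l.length = l''.length := (Quotient.exact hq).perm.length_eq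
    rw [hw]
    omega

lemma mk_w_inj {l l' : List Bv} (hl : l ≠ []) (hl' : l' ≠ [])
    (h : ConjClasses.mk (e (0, l, false)) = ConjClasses.mk (e (0, l', false))) :
    l ~r l' := by
  have h2 := nuG_isConj (ConjClasses.mk_eq_mk_iff_isConj.1 h)
  rw [nuG_e, nuG_e, nuN_eq, nuN_eq, nu_false_zero, nu_false_zero,
    if_neg hl, if_neg hl'] at h2
  have h3 : (⟦l⟧ : Neck) = ⟦l'⟧ := by injection h2
  exact Quotient.exact h3

lemma class_repr {t : ℕ} (ht : 0 < t) (c : ConjClasses G) (hc : conjClassLength c = 2 * t) :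
    ∃ l : List Bv, l.length = t ∧ c = ConjClasses.mk (e (0, l, false)) := by
  obtain ⟨g, rfl⟩ := ConjClasses.mk_surjective c
  have hne : {n | ∃ h : G, ConjClasses.mk h = ConjClasses.mk g ∧ wordLength h = n}.Nonempty :=
    ⟨wordLength g, g, rfl, rfl⟩
  have hmem := Nat.sInf_mem hne
  obtain ⟨g₀, hg₀, hwg₀⟩ := hmem
  have hw2t : wordLength g₀ = 2 * t := by
    rw [hwg₀]; exact hc
  rcases hps : psi g₀ with ⟨p0, l0, q0⟩
  have hg0 : e (p0, l0, q0) = g₀ := by rw [← hps, e_psi]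
  have hwl : wordLength g₀ = lam (p0, l0, q0) := by rw [wordLength_eq, hps]
  cases hnu : nu p0 l0 q0 with
  | none =>
    exfalso
    obtain ⟨n', h1, h2⟩ := (nu_spec (l0.length + 1) p0 l0 q0 (by omega)).2 hnu
    rw [hg0] at h1
    have hmk' : ConjClasses.mk (e n') = ConjClasses.mk g := by
      rw [← hg₀]
      exact (ConjClasses.mk_eq_mk_iff_isConj.2 h1.symm)
    have hle : conjClassLength (ConjClasses.mk g) ≤ wordLength (e n') :=
      Nat.sInf_le ⟨e n', hmk', rfl⟩
    rw [wordLength_e] at hle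
    rw [hc] at hle
    omega
  | some cl =>
    obtain ⟨l', hne', hq, hconj, _⟩ :=
      (nu_spec (l0.length + 1) p0 l0 q0 (by omega)).1 cl hnu
    rw [hg0] at hconj
    have hmkeq : ConjClasses.mk g = ConjClasses.mk (e (0, l', false)) := by
      rw [← hg₀]
      exact ConjClasses.mk_eq_mk_iff_isConj.2 hconj
    have hcl' : conjClassLength (ConjClasses.mk (e (0, l', false))) = 2 * l'.length :=
      conjLen_w l' hne'
    rw [hmkeq, hcl'] at hc
    exact ⟨l', by omega, hmkeq⟩

section Counting

variable (t : ℕ)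

abbrev XT := ZMod t → Bv

instance rotAction : AddAction (ZMod t) (XT t) where
  vadd g f := fun i => f (i + g)
  zero_vadd f := funext fun i => by show f (i + 0) = f i; rw [add_zero]
  add_vadd g h f := funext fun i => by
    show f (i + (g + h)) = f (i + g + h)
    rw [add_assoc]

lemma vadd_def (g : ZMod t) (f : XT t) (i : ZMod t) : (g +ᵥ f) i = f (i + g) := rfl

def listOf (f : XT t) : List Bv := List.ofFn (fun i : Fin t => f ((i : ℕ) : ZMod t))

lemma listOf_length (f : XT t) : (listOf t f).length = t := by
  simp [listOf]

variable [NeZero t]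

lemma listOf_injective : Function.Injective (listOf t) := by
  intro f f' h
  rw [listOf, listOf, List.ofFn_inj] at h
  funext i
  have hv : ((i.val : ℕ) : ZMod t) = i := ZMod.natCast_rightInverse i
  have := congrFun h ⟨i.val, ZMod.val_lt i⟩
  simpa [hv] using this

lemma rot_listOf (k : ℕ) (f : XT t) :
    (listOf t f).rotate k = listOf t (((k : ℕ) : ZMod t) +ᵥ f) := by
  apply List.ext_getElem
  · simp [listOf]
  · intro i h1 h2
    have hlen : (listOf t f).length = t := listOf_length t f
    rw [List.getElem_rotate]
    simp only [listOf, List.getElem_ofFn]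
    rw [vadd_def]
    simp only [List.length_ofFn]
    congr 1
    rw [ZMod.natCast_mod]
    push_cast
    ring

lemma orbitRel_iff_isRotated (f f' : XT t) :
    (AddAction.orbitRel (ZMod t) (XT t)).r f f' ↔ listOf t f ~r listOf t f' := by
  constructor
  · rintro ⟨g, rfl⟩
    show listOf t (g +ᵥ f') ~r listOf t f'
    have : ((g.val : ℕ) : ZMod t) = g := ZMod.natCast_rightInverse g
    refine List.IsRotated.symm ⟨g.val, ?_⟩
    rw [rot_listOf, this]
  · rintro ⟨k, hk⟩
    rw [rot_listOf] at hk
    have h2 := listOf_injective t hk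
    refine ⟨-(k : ZMod t), ?_⟩
    show -(k : ZMod t) +ᵥ f' = f
    rw [← h2, ← add_vadd, neg_add_cancel, zero_vadd]

end Counting

def bvEquivBool : Bv ≃ Bool where
  toFun c := decide (c.1 = 1)
  invFun b := if b then ⟨1, by decide⟩ else ⟨2, by decide⟩
  left_inv c := by
    rcases (by decide : ∀ z : ZMod 3, z = 0 ∨ z = 1 ∨ z = 2) c.1 with h | h | h
    · exact absurd h c.2
    · apply Subtype.ext
      show ((if decide (c.1 = 1) = true then (⟨1, by decide⟩ : Bv) else ⟨2, by decide⟩) : Bv).1 = c.1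
      simp [h]
    · apply Subtype.ext
      show ((if decide (c.1 = 1) = true then (⟨1, by decide⟩ : Bv) else ⟨2, by decide⟩) : Bv).1 = c.1
      rw [h]
      rw [if_neg (by decide : ¬(decide ((2 : ZMod 3) = 1) = true))]
  right_inv b := by
    cases b
    · show decide (((2 : ZMod 3) = 1)) = false
      decide
    · show decide (((1 : ZMod 3) = 1)) = true
      decide

lemma card_Bv : Nat.card Bv = 2 := by
  rw [Nat.card_congr bvEquivBool]
  simp

lemma card_quot (t : ℕ) [NeZero t] (g : ZMod t) :
    Nat.card (ZMod t ⧸ AddSubgroup.zmultiples g) = Nat.gcd t g.val := by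
  have h1 := AddSubgroup.card_eq_card_quotient_mul_card_addSubgroup (AddSubgroup.zmultiples g)
  rw [Nat.card_zmultiples] at h1
  have hZ : Nat.card (ZMod t) = t := Nat.card_zmod t
  have hord : addOrderOf g = t / Nat.gcd t g.val := by
    conv_lhs => rw [← ZMod.natCast_rightInverse g]
    rw [ZMod.addOrderOf_coe g.val (NeZero.ne t)]
  have hgcd_dvd : Nat.gcd t g.val ∣ t := Nat.gcd_dvd_left _ _
  have htpos : 0 < t := Nat.pos_of_ne_zero (NeZero.ne t)
  have hgcd_pos : 0 < Nat.gcd t g.val := Nat.gcd_pos_of_pos_left _ htpos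
  have hdiv_pos : 0 < t / Nat.gcd t g.val :=
    Nat.div_pos (Nat.le_of_dvd htpos hgcd_dvd) hgcd_pos
  rw [hZ, hord] at h1
  have ht2 : t = Nat.gcd t g.val * (t / Nat.gcd t g.val) := (Nat.mul_div_cancel' hgcd_dvd).symm
  exact Nat.eq_of_mul_eq_mul_right hdiv_pos (h1.symm.trans ht2)

lemma card_fixedBy (t : ℕ) [NeZero t] (g : ZMod t) :
    Nat.card (AddAction.fixedBy (XT t) g) = 2 ^ Nat.gcd t g.val := by
  classical
  have key : ∀ f : XT t, g +ᵥ f = f → ∀ x y : ZMod t,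
      (QuotientAddGroup.mk x : ZMod t ⧸ AddSubgroup.zmultiples g) = QuotientAddGroup.mk y →
      f x = f y := by
    intro f hf x y hxy
    let S : AddSubgroup (ZMod t) :=
      { carrier := {h | ∀ x, f (x + h) = f x}
        zero_mem' := fun x => by rw [add_zero]
        add_mem' := fun {h1} {h2} m1 m2 x => by
          rw [← add_assoc, m2 (x + h1), m1 x]
        neg_mem' := fun {h} m x => by
          have hm := m (x + -h)
          rw [add_assoc, neg_add_cancel, add_zero] at hm
          exact hm.symm }
    have hgS : g ∈ S := fun x => congrFun hf x
    have hle : AddSubgroup.zmultiples g ≤ S := AddSubgroup.zmultiples_le.2 hgS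
    have hmem : -x + y ∈ AddSubgroup.zmultiples g := QuotientAddGroup.eq.1 hxy
    have h2 := hle hmem x
    rw [add_neg_cancel_left] at h2
    exact h2.symm
  have eqv : AddAction.fixedBy (XT t) g ≃ ((ZMod t ⧸ AddSubgroup.zmultiples g) → Bv) :=
    { toFun := fun F x =>
        Quotient.liftOn' x F.1 (fun u v huv => key F.1 F.2 u v (Quotient.sound' huv))
      invFun := fun F => ⟨fun i => F (QuotientAddGroup.mk i), by
        show g +ᵥ (fun i => F (QuotientAddGroup.mk i)) = fun i => F (QuotientAddGroup.mk i)
        funext i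
        show F (QuotientAddGroup.mk (i + g)) = F (QuotientAddGroup.mk i)
        congr 1
        apply QuotientAddGroup.eq.2
        have : -(i + g) + i = -g := by ring
        rw [this]
        exact AddSubgroup.neg_mem _ (AddSubgroup.mem_zmultiples g)⟩
      left_inv := fun F => Subtype.ext (funext fun i => rfl)
      right_inv := fun F => funext fun x => QuotientAddGroup.induction_on x (fun z => rfl) }
  rw [Nat.card_congr eqv, Nat.card_fun, card_Bv, card_quot]

end P11

/-- The number of conjugacy classes of `G = ℤ/2 * ℤ/3` of length
`2t` equals `(1/t) * ∑_{j=1}^t 2^(gcd(j,t))` (stated with both sides multiplied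
by `t`). -/
theorem count_conjugacy_classes (t : ℕ) (ht : 0 < t) :
    t * Nat.card {c : ConjClasses G | conjClassLength c = 2 * t} =
      ∑ j ∈ Finset.Icc 1 t, 2 ^ Nat.gcd j t := by
  classical
  haveI : NeZero t := ⟨ht.ne'⟩
  have hlen_ne : ∀ f : P11.XT t, P11.listOf t f ≠ [] := by
    intro f h
    have h2 := P11.listOf_length t f
    rw [h] at h2
    simp at h2
    omega
  have hmem : ∀ f : P11.XT t,
      conjClassLength (ConjClasses.mk (P11.e (0, P11.listOf t f, false))) = 2 * t := by
    intro f
    rw [P11.conjLen_w _ (hlen_ne f), P11.listOf_length]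
  let Th : Quotient (AddAction.orbitRel (ZMod t) (P11.XT t)) →
      {c : ConjClasses G | conjClassLength c = 2 * t} :=
    Quotient.lift
      (fun f => ⟨ConjClasses.mk (P11.e (0, P11.listOf t f, false)), hmem f⟩)
      (fun f f' hff => Subtype.ext (ConjClasses.mk_eq_mk_iff_isConj.2
        (P11.isConj_isRotated ((P11.orbitRel_iff_isRotated t f f').1 hff))))
  have hbij : Function.Bijective Th := by
    constructor
    · intro x y
      refine Quotient.inductionOn₂ x y (fun f f' h => ?_)
      apply Quotient.sound
      have h2 : ConjClasses.mk (P11.e (0, P11.listOf t f, false))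
          = ConjClasses.mk (P11.e (0, P11.listOf t f', false)) := congrArg Subtype.val h
      exact (P11.orbitRel_iff_isRotated t f f').2
        (P11.mk_w_inj (hlen_ne f) (hlen_ne f') h2)
    · rintro ⟨c, hc⟩
      obtain ⟨l, hlt, hcl⟩ := P11.class_repr ht c hc
      refine ⟨⟦fun i : ZMod t => l.get ⟨i.val, by rw [hlt]; exact ZMod.val_lt i⟩⟧, ?_⟩
      apply Subtype.ext
      show ConjClasses.mk (P11.e (0, P11.listOf t _, false)) = c
      have hll : P11.listOf t
          (fun i : ZMod t => l.get ⟨i.val, by rw [hlt]; exact ZMod.val_lt i⟩) = l := by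
        apply List.ext_getElem
        · rw [P11.listOf_length, hlt]
        · intro i h1 h2
          rw [P11.listOf_length] at h1
          simp only [P11.listOf, List.getElem_ofFn]
          have hv : (((i : ℕ) : ZMod t)).val = i := ZMod.val_cast_of_lt h1
          simp [List.get_eq_getElem, hv]
      rw [hll, hcl]
  have hcardT : Nat.card {c : ConjClasses G | conjClassLength c = 2 * t}
      = Nat.card (Quotient (AddAction.orbitRel (ZMod t) (P11.XT t))) :=
    (Nat.card_congr (Equiv.ofBijective Th hbij)).symm
  letI : Fintype (Quotient (AddAction.orbitRel (ZMod t) (P11.XT t))) := Fintype.ofFinite _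
  letI : ∀ g : ZMod t, Fintype (AddAction.fixedBy (P11.XT t) g) := fun _ => Fintype.ofFinite _
  have hburn := AddAction.sum_card_fixedBy_eq_card_orbits_mul_card_addGroup (ZMod t) (P11.XT t)
  have hZt : Fintype.card (ZMod t) = t := ZMod.card t
  rw [hZt] at hburn
  have hfix : ∀ g : ZMod t,
      Fintype.card (AddAction.fixedBy (P11.XT t) g) = 2 ^ Nat.gcd t (g.val) := by
    intro g
    rw [← Nat.card_eq_fintype_card, P11.card_fixedBy t g]
  rw [Finset.sum_congr rfl (fun g _ => hfix g)] at hburn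
  have hre : (∑ g : ZMod t, 2 ^ Nat.gcd t (g.val)) = ∑ j ∈ Finset.Icc 1 t, 2 ^ Nat.gcd j t := by
    apply Finset.sum_nbij' (i := fun (g : ZMod t) => if g.val = 0 then t else g.val)
      (j := fun (m : ℕ) => ((m : ℕ) : ZMod t))
    · intro g _
      by_cases hg : g.val = 0
      · simp only [hg, if_pos, Finset.mem_Icc]
        omega
      · rw [if_neg hg, Finset.mem_Icc]
        have hvl := ZMod.val_lt g
        omega
    · intro m _
      exact Finset.mem_univ _
    · intro g _
      by_cases hg : g.val = 0
      · rw [if_pos hg]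
        have h0 : g = 0 := (ZMod.val_eq_zero _).1 hg
        rw [h0, ZMod.natCast_self]
      · rw [if_neg hg]
        exact ZMod.natCast_rightInverse g
    · intro m hm
      rw [Finset.mem_Icc] at hm
      have hv : ((m : ZMod t)).val = m % t := ZMod.val_natCast t m
      by_cases hmt : m = t
      · subst hmt
        rw [hv, Nat.mod_self, if_pos rfl]
      · have hlt : m < t := by omega
        rw [hv, Nat.mod_eq_of_lt hlt, if_neg (by omega)]
    · intro g _
      by_cases hg : g.val = 0
      · rw [if_pos hg, hg]
        rw [Nat.gcd_zero_right, Nat.gcd_self]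
      · rw [if_neg hg, Nat.gcd_comm]
  rw [hcardT, Nat.card_eq_fintype_card, mul_comm, ← hburn, hre]
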